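/- Let R ⊆ S be a ring extension with the same unity, Θ : G → S_R(S) a unital partial representation with Θ_x Θ_{x⁻¹} = R1_x, and M an S-bimodule. Then the map m_l : Θ_x ⊗_R M → Θ_x M, u_x ⊗ m ↦ u_x m, is an isomorphism of R-S-bimodules, with inverse m ↦ Σ_{(x)} ω_x ⊗ ω_{x⁻¹} m where Σ_{(x)} ω_x ω_{x⁻¹} = 1_x. Similarly M ⊗_R Θ_x → M Θ_x, m ⊗ u_x ↦ m u_x, is an S-R-bimodule isomorphism. -/

import Mathlib

noncomputable section

open MulOpposite TensorProduct

universe u v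

/-- The subgroup of balancing relations defining the tensor product `M ⊗_R N` of bimodules
over the (possibly noncommutative) ring `R`, where `ρ` is the right `R`-action on `M` and
`σ` is the left `R`-action on `N`. -/
abbrev bal {R : Type*} [Ring R] {M N : Type*} [AddCommGroup M] [AddCommGroup N]
    (ρ : R → M → M) (σ : R → N → N) : AddSubgroup (TensorProduct ℤ M N) :=
  AddSubgroup.closure { z | ∃ (m : M) (r : R) (n : N), z = ρ r m ⊗ₜ[ℤ] n - m ⊗ₜ[ℤ] σ r n }

/-- The tensor product `M ⊗_R N` over a noncommutative ring `R`. -/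
abbrev BT {R : Type*} [Ring R] {M N : Type*} [AddCommGroup M] [AddCommGroup N]
    (ρ : R → M → M) (σ : R → N → N) : Type _ :=
  TensorProduct ℤ M N ⧸ bal ρ σ

/-- Pure tensors `m ⊗ n` in `M ⊗_R N`. -/
def BT.mk {R : Type*} [Ring R] {M N : Type*} [AddCommGroup M] [AddCommGroup N]
    (ρ : R → M → M) (σ : R → N → N) (m : M) (n : N) : BT ρ σ :=
  QuotientAddGroup.mk (m ⊗ₜ[ℤ] n)

set_option maxHeartbeats 2000000 in
/-- let `R ⊆ S` be a ring extension with the same unity,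
`Θ : G → S_R(S)` a unital partial representation with `Θ x Θ x⁻¹ = R 1_x`, and `M` an
`S`-bimodule.  Then `m_l : Θ x ⊗_R M → Θ x M`, `u ⊗ m ↦ u m`, is an isomorphism of
`R`-`S`-bimodules, with inverse `m ↦ ∑ ω_i ⊗ ω_i' m` where `∑ ω_i ω_i' = 1_x`; similarly
`m_r : M ⊗_R Θ x → M Θ x`, `m ⊗ u ↦ m u`, is an `S`-`R`-bimodule isomorphism. -/
theorem statement19 (S : Type u) [Ring S] (R : Subring S) (G : Type v) [Group G]
    (e : G → S) (he_mem : ∀ x, e x ∈ R)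
    (he_central : ∀ x : G, ∀ r ∈ R, e x * r = r * e x)
    (he_idem : ∀ x, IsIdempotentElem (e x))
    (Θ : G → AddSubgroup S)
    (hΘl : ∀ x : G, ∀ r ∈ R, ∀ u ∈ Θ x, r * u ∈ Θ x)
    (hΘr : ∀ x : G, ∀ r ∈ R, ∀ u ∈ Θ x, u * r ∈ Θ x)
    (hΘ1 : Θ 1 = R.toAddSubgroup)
    (hrep1 : ∀ x y : G, ∀ u ∈ Θ x, ∀ v ∈ Θ y, ∀ w ∈ Θ y⁻¹, u * v * w ∈ Θ (x * y))
    (hunit_l : ∀ x : G, ∀ u ∈ Θ x, e x * u = u)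
    (hunit_r : ∀ x : G, ∀ u ∈ Θ x, u * e x⁻¹ = u)
    (hdec : ∀ x : G, ∃ (n : ℕ) (w : Fin n → S × S),
      (∀ i, (w i).1 ∈ Θ x ∧ (w i).2 ∈ Θ x⁻¹) ∧ (∑ i, (w i).1 * (w i).2) = e x)
    (hprod : ∀ x : G, ∀ u ∈ Θ x, ∀ v ∈ Θ x⁻¹, u * v ∈ R ∧ u * v * e x = u * v)
    (x : G) (M : Type u) [AddCommGroup M]
    [Module S M] [Module Sᵐᵒᵖ M] [SMulCommClass S Sᵐᵒᵖ M] :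
    -- the actions defining `Θ x ⊗_R M`
    ∀ ρ : ↥R → ↥(Θ x) → ↥(Θ x), (∀ r u, ((ρ r u : S) = (u : S) * (r : S))) →
    ∀ σ : ↥R → M → M, (σ = fun (r : ↥R) (m : M) => r.val • m) →
    -- the subbimodule `Θ x · M` of `M`
    ∀ ΘxM : AddSubgroup M,
      (ΘxM = AddSubgroup.closure {z : M | ∃ u ∈ Θ x, ∃ m : M, z = u • m}) →
    -- the left `R`-action and the right `S`-action on `Θ x ⊗_R M`
    ∀ lAct : ↥R → (BT ρ σ →+ BT ρ σ),
      (∀ (r : ↥R) (u u' : ↥(Θ x)) (m : M), (u' : S) = (r : S) * (u : S) →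
        lAct r (BT.mk ρ σ u m) = BT.mk ρ σ u' m) →
    ∀ rAct : S → (BT ρ σ →+ BT ρ σ),
      (∀ (s : S) (u : ↥(Θ x)) (m : M),
        rAct s (BT.mk ρ σ u m) = BT.mk ρ σ u (op s • m)) →
    -- `m_l` is an `R`-`S`-bimodule isomorphism with the stated inverse
    ((∃ φ : BT ρ σ ≃+ ↥ΘxM,
      (∀ (u : ↥(Θ x)) (m : M), (φ (BT.mk ρ σ u m) : M) = (u : S) • m) ∧
      (∀ (r : ↥R) (t : BT ρ σ), (φ (lAct r t) : M) = (r : S) • (φ t : M)) ∧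
      (∀ (s : S) (t : BT ρ σ), (φ (rAct s t) : M) = op s • (φ t : M)) ∧
      (∀ (n : ℕ) (w : Fin n → ↥(Θ x) × S),
        (∀ i, (w i).2 ∈ Θ x⁻¹) → (∑ i, ((w i).1 : S) * (w i).2) = e x →
        ∀ v : ↥ΘxM,
          φ.symm v = ∑ i, BT.mk ρ σ ((w i).1) (((w i).2 : S) • (v : M)))) ∧
    -- `m_r` is an `S`-`R`-bimodule isomorphism
    (∀ ρ' : ↥R → M → M, (ρ' = fun (r : ↥R) (m : M) => op r.val • m) →
     ∀ σ' : ↥R → ↥(Θ x) → ↥(Θ x), (∀ r u, ((σ' r u : S) = (r : S) * (u : S))) →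
     ∀ MΘx : AddSubgroup M,
       (MΘx = AddSubgroup.closure {z : M | ∃ m : M, ∃ u ∈ Θ x, z = op u • m}) →
     ∀ lAct' : S → (BT ρ' σ' →+ BT ρ' σ'),
       (∀ (s : S) (m : M) (u : ↥(Θ x)),
         lAct' s (BT.mk ρ' σ' m u) = BT.mk ρ' σ' (s • m) u) →
     ∀ rAct' : ↥R → (BT ρ' σ' →+ BT ρ' σ'),
       (∀ (r : ↥R) (m : M) (u u' : ↥(Θ x)), (u' : S) = (u : S) * (r : S) →
         rAct' r (BT.mk ρ' σ' m u) = BT.mk ρ' σ' m u') →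
       ∃ ψ : BT ρ' σ' ≃+ ↥MΘx,
         (∀ (m : M) (u : ↥(Θ x)), (ψ (BT.mk ρ' σ' m u) : M) = op (u : S) • m) ∧
         (∀ (s : S) (t : BT ρ' σ'), (ψ (lAct' s t) : M) = s • (ψ t : M)) ∧
         (∀ (r : ↥R) (t : BT ρ' σ'), (ψ (rAct' r t) : M) = op (r : S) • (ψ t : M)))) := by
  intro ρ hρ σ hσ ΘxM hΘxM lAct hlAct rAct hrAct
  subst hΘxM
  classical
  have hσs : ∀ (r : ↥R) (m : M), σ r m = (r : S) • m := fun r m => by rw [hσ]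
  constructor
  · -- first part : m_l
    obtain ⟨n, w, hw, hsum⟩ := hdec x
    -- the multiplication map on the tensor product
    set F : ↥(Θ x) →+ M →+ M :=
      { toFun := fun u =>
          { toFun := fun m => (u : S) • m
            map_zero' := smul_zero _
            map_add' := fun a b => smul_add _ a b }
        map_zero' := by ext m; simp
        map_add' := fun u v => by ext m; simp [add_smul] } with hF
    have hFcompat : ∀ (c : ℤ) (u : ↥(Θ x)) (m : M), F (c • u) m = F u (c • m) := by
      intro c u m
      have hcoe : ((c • u : ↥(Θ x)) : S) = c • (u : S) := by simp
      simp only [hF, AddMonoidHom.coe_mk, ZeroHom.coe_mk, hcoe]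
      rw [smul_assoc, smul_comm]
    set F2 : ↥(Θ x) ⊗[ℤ] M →+ M := TensorProduct.liftAddHom F hFcompat with hF2
    have hF2tmul : ∀ (u : ↥(Θ x)) (m : M), F2 (u ⊗ₜ[ℤ] m) = (u : S) • m := by
      intro u m; simp [hF2, hF]
    have hker : bal ρ σ ≤ F2.ker := by
      refine (AddSubgroup.closure_le _).2 ?_
      rintro z ⟨m, r, m', rfl⟩
      simp only [SetLike.mem_coe, AddMonoidHom.mem_ker, map_sub, hF2tmul, hρ, hσs]
      rw [mul_smul]
      exact sub_self _
    set f0 : BT ρ σ →+ M := QuotientAddGroup.lift (bal ρ σ) F2 hker with hf0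
    have hf0mk : ∀ (u : ↥(Θ x)) (m : M), f0 (BT.mk ρ σ u m) = (u : S) • m := by
      intro u m; simp [hf0, BT.mk, hF2tmul]
    have hmem : ∀ t : BT ρ σ,
        f0 t ∈ AddSubgroup.closure {z : M | ∃ u ∈ Θ x, ∃ m : M, z = u • m} := by
      intro t
      induction t using QuotientAddGroup.induction_on with
      | _ z =>
        induction z using TensorProduct.induction_on with
        | zero => simpa using zero_mem _
        | tmul u m =>
          have : f0 (QuotientAddGroup.mk (u ⊗ₜ[ℤ] m)) = (u : S) • m := hf0mk u m
          rw [this]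
          exact AddSubgroup.subset_closure ⟨u, u.2, m, rfl⟩
        | add a b ha hb =>
          have : (QuotientAddGroup.mk (a + b) : BT ρ σ)
              = QuotientAddGroup.mk a + QuotientAddGroup.mk b := rfl
          rw [this, map_add]
          exact add_mem ha hb
    -- the inverse map
    have hwmem1 : ∀ i, (w i).1 ∈ Θ x := fun i => (hw i).1
    have hwmem2 : ∀ i, (w i).2 ∈ Θ x⁻¹ := fun i => (hw i).2
    set g : M →+ BT ρ σ := AddMonoidHom.mk'
      (fun m => ∑ i, BT.mk ρ σ ⟨(w i).1, hwmem1 i⟩ ((w i).2 • m))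
      (fun m m' => by
        rw [← Finset.sum_add_distrib]
        refine Finset.sum_congr rfl fun i _ => ?_
        simp [BT.mk, smul_add, TensorProduct.tmul_add]) with hg
    have hgdef : ∀ m : M, g m = ∑ i, BT.mk ρ σ ⟨(w i).1, hwmem1 i⟩ ((w i).2 • m) :=
      fun m => rfl
    -- balancing relations in BT
    have hbal : ∀ (u : ↥(Θ x)) (r : ↥R) (m : M),
        BT.mk ρ σ u ((r : S) • m) = BT.mk ρ σ (ρ r u) m := by
      intro u r m
      refine QuotientAddGroup.eq.2 ?_
      rw [neg_add_eq_sub]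
      refine AddSubgroup.subset_closure ⟨u, r, m, ?_⟩
      rw [hσs]
    have hmk_sum : ∀ (k : ℕ) (u : Fin k → ↥(Θ x)) (m : M),
        BT.mk ρ σ (∑ i, u i) m = ∑ i, BT.mk ρ σ (u i) m := by
      intro k u m
      simp only [BT.mk, TensorProduct.sum_tmul]
      exact map_sum (QuotientAddGroup.mk' (bal ρ σ)) _ _
    -- e x acts as identity on Θ x • M
    have hex_smul : ∀ m ∈ AddSubgroup.closure {z : M | ∃ u ∈ Θ x, ∃ m : M, z = u • m},
        e x • m = m := by
      intro m hm
      induction hm using AddSubgroup.closure_induction with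
      | mem z hz =>
        obtain ⟨u, hu, m₀, rfl⟩ := hz
        rw [← mul_smul, hunit_l x u hu]
      | zero => simp
      | add a b _ _ ha hb => rw [smul_add, ha, hb]
      | neg a _ ha => rw [smul_neg, ha]
    -- g ∘ f0 = id
    have hgf : ∀ t : BT ρ σ, g (f0 t) = t := by
      intro t
      induction t using QuotientAddGroup.induction_on with
      | _ z =>
        induction z using TensorProduct.induction_on with
        | zero => simp
        | tmul u m =>
          have h1 : f0 (QuotientAddGroup.mk (u ⊗ₜ[ℤ] m)) = (u : S) • m := hf0mk u m
          rw [h1, hgdef]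
          have h2 : ∀ i, (w i).2 • ((u : S) • m) = ((w i).2 * u) • m := by
            intro i; rw [← mul_smul]
          have hr : ∀ i, (w i).2 * (u : S) ∈ R := by
            intro i
            exact (hprod x⁻¹ _ (hwmem2 i) _ (by rw [inv_inv]; exact u.2)).1
          have h3 : ∀ i, BT.mk ρ σ ⟨(w i).1, hwmem1 i⟩ ((w i).2 • ((u : S) • m))
              = BT.mk ρ σ (ρ ⟨(w i).2 * u, hr i⟩ ⟨(w i).1, hwmem1 i⟩) m := by
            intro i
            rw [h2 i, ← hbal ⟨(w i).1, hwmem1 i⟩ ⟨(w i).2 * u, hr i⟩ m]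
          rw [Finset.sum_congr rfl (fun i _ => h3 i), ← hmk_sum]
          have h4 : (∑ i, ρ ⟨(w i).2 * u, hr i⟩ ⟨(w i).1, hwmem1 i⟩) = u := by
            apply Subtype.ext
            push_cast [hρ]
            calc (∑ i, (w i).1 * ((w i).2 * (u : S)))
                = (∑ i, (w i).1 * (w i).2) * u := by
                  rw [Finset.sum_mul]; exact Finset.sum_congr rfl fun i _ => (mul_assoc _ _ _).symm
              _ = u := by rw [hsum, hunit_l x u u.2]
          rw [h4]; rfl
        | add a b ha hb =>
          have hq : (QuotientAddGroup.mk (a + b) : BT ρ σ)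
              = QuotientAddGroup.mk a + QuotientAddGroup.mk b := rfl
          rw [hq, map_add, map_add, ha, hb]
    -- f0 ∘ g = id on Θ x • M
    have hfg : ∀ m ∈ AddSubgroup.closure {z : M | ∃ u ∈ Θ x, ∃ m : M, z = u • m},
        f0 (g m) = m := by
      intro m hm
      rw [hgdef, map_sum]
      have : ∀ i, f0 (BT.mk ρ σ ⟨(w i).1, hwmem1 i⟩ ((w i).2 • m))
          = ((w i).1 * (w i).2) • m := by
        intro i; rw [hf0mk, ← mul_smul]
      rw [Finset.sum_congr rfl fun i _ => this i, ← Finset.sum_smul, hsum, hex_smul m hm]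
    -- assemble the equivalence
    set φ : BT ρ σ ≃+ ↥(AddSubgroup.closure {z : M | ∃ u ∈ Θ x, ∃ m : M, z = u • m}) :=
      AddEquiv.mk' ⟨fun t => ⟨f0 t, hmem t⟩, fun v => g (v : M),
        fun t => hgf t, fun v => Subtype.ext (hfg (v : M) v.2)⟩
        (fun a b => Subtype.ext (by simp)) with hφ
    have hφval : ∀ t : BT ρ σ, (φ t : M) = f0 t := fun t => rfl
    have hφsymm : ∀ v, φ.symm v = g (v : M) := fun v => rfl
    refine ⟨φ, ?_, ?_, ?_, ?_⟩
    · intro u m; rw [hφval, hf0mk]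
    · intro r t
      induction t using QuotientAddGroup.induction_on with
      | _ z =>
        induction z using TensorProduct.induction_on with
        | zero => simp
        | tmul u m =>
          have hmk : (QuotientAddGroup.mk (u ⊗ₜ[ℤ] m) : BT ρ σ) = BT.mk ρ σ u m := rfl
          have hru : (r : S) * (u : S) ∈ Θ x := hΘl x r r.2 u u.2
          rw [hmk, hlAct r u ⟨(r : S) * u, hru⟩ m rfl, hφval, hφval, hf0mk, hf0mk]
          exact mul_smul _ _ _
        | add a b ha hb =>
          have hq : (QuotientAddGroup.mk (a + b) : BT ρ σ)
              = QuotientAddGroup.mk a + QuotientAddGroup.mk b := rfl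
          rw [hq, map_add, map_add, map_add]
          push_cast
          rw [ha, hb, smul_add]
    · intro s t
      induction t using QuotientAddGroup.induction_on with
      | _ z =>
        induction z using TensorProduct.induction_on with
        | zero => simp
        | tmul u m =>
          have hmk : (QuotientAddGroup.mk (u ⊗ₜ[ℤ] m) : BT ρ σ) = BT.mk ρ σ u m := rfl
          rw [hmk, hrAct s u m, hφval, hφval, hf0mk, hf0mk]
          exact smul_comm _ _ _
        | add a b ha hb =>
          have hq : (QuotientAddGroup.mk (a + b) : BT ρ σ)
              = QuotientAddGroup.mk a + QuotientAddGroup.mk b := rfl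
          rw [hq, map_add, map_add, map_add]
          push_cast
          rw [ha, hb, smul_add]
    · intro k w' hw' hsum' v
      apply φ.injective
      rw [AddEquiv.apply_symm_apply, map_sum]
      apply Subtype.ext
      push_cast [hφval, hf0mk]
      have : ∀ i, ((w' i).1 : S) • (((w' i).2 : S) • (v : M))
          = (((w' i).1 : S) * (w' i).2) • (v : M) := fun i => (mul_smul _ _ _).symm
      rw [Finset.sum_congr rfl fun i _ => this i, ← Finset.sum_smul, hsum',
        hex_smul (v : M) v.2]
  · -- second part : m_r
    intro ρ' hρ' σ' hσ' MΘx hMΘx lAct' hlAct' rAct' hrAct'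
    subst hMΘx
    have hρs : ∀ (r : ↥R) (m : M), ρ' r m = op (r : S) • m := fun r m => by rw [hρ']
    obtain ⟨n, w, hw, hsum⟩ := hdec x⁻¹
    have hwmem1 : ∀ i, (w i).1 ∈ Θ x⁻¹ := fun i => (hw i).1
    have hwmem2 : ∀ i, (w i).2 ∈ Θ x := fun i => by
      have := (hw i).2; rwa [inv_inv] at this
    set F : M →+ ↥(Θ x) →+ M :=
      { toFun := fun m =>
          { toFun := fun u => op (u : S) • m
            map_zero' := by simp
            map_add' := fun a b => by
              simp [add_smul] }
        map_zero' := by ext u; simp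
        map_add' := fun m m' => by ext u; simp [smul_add] } with hF
    have hFcompat : ∀ (c : ℤ) (m : M) (u : ↥(Θ x)), F (c • m) u = F m (c • u) := by
      intro c m u
      have hcoe : ((c • u : ↥(Θ x)) : S) = c • (u : S) := by simp
      simp only [hF, AddMonoidHom.coe_mk, ZeroHom.coe_mk, hcoe]
      rw [op_smul, smul_assoc]
      exact smul_comm _ _ _
    set F2 : M ⊗[ℤ] ↥(Θ x) →+ M := TensorProduct.liftAddHom F hFcompat with hF2
    have hF2tmul : ∀ (m : M) (u : ↥(Θ x)), F2 (m ⊗ₜ[ℤ] u) = op (u : S) • m := by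
      intro m u; simp [hF2, hF]
    have hker : bal ρ' σ' ≤ F2.ker := by
      refine (AddSubgroup.closure_le _).2 ?_
      rintro z ⟨m, r, u, rfl⟩
      simp only [SetLike.mem_coe, AddMonoidHom.mem_ker, map_sub, hF2tmul, hρs, hσ']
      rw [smul_smul, ← op_mul]
      exact sub_self _
    set f0 : BT ρ' σ' →+ M := QuotientAddGroup.lift (bal ρ' σ') F2 hker with hf0
    have hf0mk : ∀ (m : M) (u : ↥(Θ x)), f0 (BT.mk ρ' σ' m u) = op (u : S) • m := by
      intro m u; simp [hf0, BT.mk, hF2tmul]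
    have hmem : ∀ t : BT ρ' σ',
        f0 t ∈ AddSubgroup.closure {z : M | ∃ m : M, ∃ u ∈ Θ x, z = op u • m} := by
      intro t
      induction t using QuotientAddGroup.induction_on with
      | _ z =>
        induction z using TensorProduct.induction_on with
        | zero => simpa using zero_mem _
        | tmul m u =>
          have : f0 (QuotientAddGroup.mk (m ⊗ₜ[ℤ] u)) = op (u : S) • m := hf0mk m u
          rw [this]
          exact AddSubgroup.subset_closure ⟨m, u, u.2, rfl⟩
        | add a b ha hb =>
          have : (QuotientAddGroup.mk (a + b) : BT ρ' σ')
              = QuotientAddGroup.mk a + QuotientAddGroup.mk b := rfl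
          rw [this, map_add]
          exact add_mem ha hb
    set g : M →+ BT ρ' σ' := AddMonoidHom.mk'
      (fun m => ∑ i, BT.mk ρ' σ' (op ((w i).1) • m) ⟨(w i).2, hwmem2 i⟩)
      (fun m m' => by
        rw [← Finset.sum_add_distrib]
        refine Finset.sum_congr rfl fun i _ => ?_
        simp [BT.mk, smul_add, TensorProduct.add_tmul]) with hg
    have hgdef : ∀ m : M,
        g m = ∑ i, BT.mk ρ' σ' (op ((w i).1) • m) ⟨(w i).2, hwmem2 i⟩ := fun m => rfl
    have hbal : ∀ (m : M) (r : ↥R) (u : ↥(Θ x)),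
        BT.mk ρ' σ' (op (r : S) • m) u = BT.mk ρ' σ' m (σ' r u) := by
      intro m r u
      refine Eq.symm (QuotientAddGroup.eq.2 ?_)
      rw [neg_add_eq_sub]
      refine AddSubgroup.subset_closure ⟨m, r, u, ?_⟩
      rw [hρs]
    have hmk_sum : ∀ (k : ℕ) (u : Fin k → ↥(Θ x)) (m : M),
        BT.mk ρ' σ' m (∑ i, u i) = ∑ i, BT.mk ρ' σ' m (u i) := by
      intro k u m
      simp only [BT.mk, TensorProduct.tmul_sum]
      exact map_sum (QuotientAddGroup.mk' (bal ρ' σ')) _ _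
    have hex_smul : ∀ m ∈ AddSubgroup.closure {z : M | ∃ m : M, ∃ u ∈ Θ x, z = op u • m},
        op (e x⁻¹) • m = m := by
      intro m hm
      induction hm using AddSubgroup.closure_induction with
      | mem z hz =>
        obtain ⟨m₀, u, hu, rfl⟩ := hz
        rw [smul_smul, ← op_mul, hunit_r x u hu]
      | zero => simp
      | add a b _ _ ha hb => rw [smul_add, ha, hb]
      | neg a _ ha => rw [smul_neg, ha]
    have hgf : ∀ t : BT ρ' σ', g (f0 t) = t := by
      intro t
      induction t using QuotientAddGroup.induction_on with
      | _ z =>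
        induction z using TensorProduct.induction_on with
        | zero => simp
        | tmul m u =>
          have h1 : f0 (QuotientAddGroup.mk (m ⊗ₜ[ℤ] u)) = op (u : S) • m := hf0mk m u
          rw [h1, hgdef]
          have hr : ∀ i, (u : S) * (w i).1 ∈ R := fun i =>
            (hprod x _ u.2 _ (hwmem1 i)).1
          have h3 : ∀ i, BT.mk ρ' σ' (op ((w i).1) • op (u : S) • m) ⟨(w i).2, hwmem2 i⟩
              = BT.mk ρ' σ' m (σ' ⟨(u : S) * (w i).1, hr i⟩ ⟨(w i).2, hwmem2 i⟩) := by
            intro i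
            rw [smul_smul, ← op_mul,
              hbal m ⟨(u : S) * (w i).1, hr i⟩ ⟨(w i).2, hwmem2 i⟩]
          rw [Finset.sum_congr rfl (fun i _ => h3 i), ← hmk_sum]
          have h4 : (∑ i, σ' ⟨(u : S) * (w i).1, hr i⟩ ⟨(w i).2, hwmem2 i⟩) = u := by
            apply Subtype.ext
            push_cast [hσ']
            calc (∑ i, ((u : S) * (w i).1) * (w i).2)
                = (u : S) * ∑ i, (w i).1 * (w i).2 := by
                  rw [Finset.mul_sum]
                  exact Finset.sum_congr rfl fun i _ => mul_assoc _ _ _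
              _ = u := by rw [hsum, hunit_r x u u.2]
          rw [h4]; rfl
        | add a b ha hb =>
          have hq : (QuotientAddGroup.mk (a + b) : BT ρ' σ')
              = QuotientAddGroup.mk a + QuotientAddGroup.mk b := rfl
          rw [hq, map_add, map_add, ha, hb]
    have hfg : ∀ m ∈ AddSubgroup.closure {z : M | ∃ m : M, ∃ u ∈ Θ x, z = op u • m},
        f0 (g m) = m := by
      intro m hm
      rw [hgdef, map_sum]
      have h1 : ∀ i, f0 (BT.mk ρ' σ' (op ((w i).1) • m) ⟨(w i).2, hwmem2 i⟩)
          = op ((w i).1 * (w i).2) • m := by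
        intro i; rw [hf0mk, smul_smul, ← op_mul]
      have hopsum : (∑ i, op ((w i).1 * (w i).2)) = op (e x⁻¹) := by
        rw [← hsum]
        exact (map_sum (MulOpposite.opAddEquiv (α := S)) _ _).symm
      rw [Finset.sum_congr rfl fun i _ => h1 i, ← Finset.sum_smul, hopsum,
        hex_smul m hm]
    set ψ : BT ρ' σ' ≃+ ↥(AddSubgroup.closure {z : M | ∃ m : M, ∃ u ∈ Θ x, z = op u • m}) :=
      AddEquiv.mk' ⟨fun t => ⟨f0 t, hmem t⟩, fun v => g (v : M),
        fun t => hgf t, fun v => Subtype.ext (hfg (v : M) v.2)⟩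
        (fun a b => Subtype.ext (by simp)) with hψ
    have hψval : ∀ t : BT ρ' σ', (ψ t : M) = f0 t := fun t => rfl
    refine ⟨ψ, ?_, ?_, ?_⟩
    · intro m u; rw [hψval, hf0mk]
    · intro s t
      induction t using QuotientAddGroup.induction_on with
      | _ z =>
        induction z using TensorProduct.induction_on with
        | zero => simp
        | tmul m u =>
          have hmk : (QuotientAddGroup.mk (m ⊗ₜ[ℤ] u) : BT ρ' σ') = BT.mk ρ' σ' m u := rfl
          rw [hmk, hlAct' s m u, hψval, hψval, hf0mk, hf0mk]
          exact (smul_comm _ _ _).symm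
        | add a b ha hb =>
          have hq : (QuotientAddGroup.mk (a + b) : BT ρ' σ')
              = QuotientAddGroup.mk a + QuotientAddGroup.mk b := rfl
          rw [hq, map_add, map_add, map_add]
          push_cast
          rw [ha, hb, smul_add]
    · intro r t
      induction t using QuotientAddGroup.induction_on with
      | _ z =>
        induction z using TensorProduct.induction_on with
        | zero => simp
        | tmul m u =>
          have hmk : (QuotientAddGroup.mk (m ⊗ₜ[ℤ] u) : BT ρ' σ') = BT.mk ρ' σ' m u := rfl
          have hur : (u : S) * (r : S) ∈ Θ x := hΘr x r r.2 u u.2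
          rw [hmk, hrAct' r m u ⟨(u : S) * r, hur⟩ rfl, hψval, hψval, hf0mk, hf0mk]
          rw [smul_smul, ← op_mul]
        | add a b ha hb =>
          have hq : (QuotientAddGroup.mk (a + b) : BT ρ' σ')
              = QuotientAddGroup.mk a + QuotientAddGroup.mk b := rfl
          rw [hq, map_add, map_add, map_add]
          push_cast
          rw [ha, hb, smul_add]
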